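/- With τ² = 1, for every nonempty u ⊆ [r] the gain ratio satisfies 2^{|u|} − 1 − (2^{r+1}−2)ε < γ_u/ν_u ≤ 2^{|u|}(1+2η)^{r−|u|} − 1 + (2^{r+1}−2)ε, where η = max_{∅⊊u⊊v} ν_v/ν_u. -/

import Mathlib

open scoped BigOperators

open Finset

lemma aux_sum_pow {r : ℕ} (u : Finset (Fin r)) (x : ℝ) :
    ∑ w ∈ (Finset.univ : Finset (Fin r)).powerset, x ^ (w \ u).card
      = 2 ^ u.card * (1 + x) ^ (r - u.card) := by
  classical
  have h := Finset.prod_add (fun j : Fin r => if j ∈ u then (1:ℝ) else x)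
      (fun _ => (1:ℝ)) Finset.univ
  simp only [Finset.prod_const_one, mul_one] at h
  have hL : ∏ j : Fin r, ((if j ∈ u then (1:ℝ) else x) + 1)
      = 2 ^ u.card * (1 + x) ^ (r - u.card) := by
    have : ∀ j : Fin r, ((if j ∈ u then (1:ℝ) else x) + 1)
        = (if j ∈ u then (2:ℝ) else 1 + x) := by
      intro j; split <;> ring
    rw [Finset.prod_congr rfl fun j _ => this j, Finset.prod_ite, Finset.prod_const,
      Finset.prod_const, Finset.filter_univ_mem]
    congr 2
    rw [Finset.filter_not, Finset.filter_univ_mem, Finset.card_sdiff_of_subset (Finset.subset_univ u),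
      Finset.card_univ, Fintype.card_fin]
  have hR : ∀ w ∈ (Finset.univ : Finset (Fin r)).powerset,
      (∏ j ∈ w, if j ∈ u then (1:ℝ) else x) = x ^ (w \ u).card := by
    intro w _
    rw [Finset.prod_ite, Finset.prod_const_one, one_mul, Finset.prod_const]
    congr 1
    rw [Finset.sdiff_eq_filter]
  rw [← Finset.sum_congr rfl hR, ← h, hL]

set_option maxHeartbeats 1000000

/-- Theorem 6, first claim (`τ² = 1`): for every nonempty `u ⊆ [r]`,
`2^{|u|} − 1 − (2^{r+1}−2)ε < γ_u/ν_u ≤ 2^{|u|}(1+2η)^{r−|u|} − 1 + (2^{r+1}−2)ε`,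
where `ε = max_i max_j N_{i,{j}}/N` and `η = max_{∅ ⊊ u ⊊ v} ν_v/ν_u`. -/
theorem stmt15 {r : ℕ} (hr : 2 ≤ r)
    (Z : (Fin r → ℕ) → ℝ)
    (hZ01 : ∀ i, Z i = 0 ∨ Z i = 1)
    (hZfin : (Function.support Z).Finite)
    (N : ℝ) (hN : N = ∑ᶠ i, Z i) (hNpos : 0 < N)
    (Nmatch : (Fin r → ℕ) → Finset (Fin r) → ℝ)
    (hNmatch : ∀ i u, Nmatch i u
      = ∑ᶠ i', Z i' * (if ∀ j ∈ u, i j = i' j then (1 : ℝ) else 0))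
    (NmatchK : (Fin r → ℕ) → ℕ → ℝ)
    (hNmatchK : ∀ i k, NmatchK i k
      = ∑ᶠ i', Z i' * (if (Finset.univ.filter (fun j => i j = i' j)).card = k
          then (1 : ℝ) else 0))
    (ν : Finset (Fin r) → ℝ)
    (hν : ∀ u, ν u = (1 / N) * ∑ᶠ i, Z i * Nmatch i u)
    (ρ : ℕ → ℝ)
    (hρ : ∀ k, ρ k = (1 / N ^ 2) * ∑ᶠ i, Z i * NmatchK i k)
    (νk : ℕ → Finset (Fin r) → ℝ)
    (hνk : ∀ k u, νk k u = (1 / N) * ∑ᶠ i, ∑ᶠ i', Z i * Z i' *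
      (if (Finset.univ.filter (fun j => i j = i' j)).card = k ∧ ∀ j ∈ u, i j = i' j
        then (1 : ℝ) else 0))
    (νt : ℕ → Finset (Fin r) → ℝ)
    (hνt : ∀ k u, νt k u = (1 / N ^ 2) * ∑ᶠ i, Z i * Nmatch i u * NmatchK i k)
    (γ : Finset (Fin r) → ℝ)
    (hγ : ∀ u, γ u = ∑ k ∈ Finset.range (r + 1),
      (2 : ℝ) ^ k * (νk k u - 2 * νt k u + ρ k * ν u))
    (eps : ℝ)
    (hepsub : ∀ (i : Fin r → ℕ) (j : Fin r), Z i = 1 → Nmatch i {j} / N ≤ eps)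
    (hepsmax : ∃ (i : Fin r → ℕ) (j : Fin r), Z i = 1 ∧ Nmatch i {j} / N = eps)
    (η : ℝ)
    (hηub : ∀ u v : Finset (Fin r), ∅ ⊂ u → u ⊂ v → ν v / ν u ≤ η)
    (hηmax : ∃ u v : Finset (Fin r), ∅ ⊂ u ∧ u ⊂ v ∧ ν v / ν u = η)
    (u : Finset (Fin r)) (hu : u.Nonempty) :
    2 ^ u.card - 1 - (2 ^ (r + 1) - 2) * eps < γ u / ν u
    ∧ γ u / ν u ≤ 2 ^ u.card * (1 + 2 * η) ^ (r - u.card) - 1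
        + (2 ^ (r + 1) - 2) * eps := by
  classical
  have hN0 : N ≠ 0 := ne_of_gt hNpos
  set S : Finset (Fin r → ℕ) := hZfin.toFinset with hSdef
  have hZ1 : ∀ i ∈ S, Z i = 1 := fun i hi =>
    (hZ01 i).resolve_left (by simpa [hSdef] using hi)
  have hZ0 : ∀ i, i ∉ S → Z i = 0 := by
    intro i hi; by_contra h
    exact hi (by simpa [hSdef, Set.Finite.mem_toFinset] using h)
  -- finsum conversion
  have hconv : ∀ g : (Fin r → ℕ) → ℝ, ∑ᶠ i, Z i * g i = ∑ i ∈ S, g i := by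
    intro g
    rw [finsum_eq_sum_of_support_subset _ (s := S)
      (Function.support_subset_iff'.mpr fun i hi => by rw [hZ0 i (by simpa using hi), zero_mul])]
    exact Finset.sum_congr rfl fun i hi => by rw [hZ1 i hi, one_mul]
  have hN' : N = (S.card : ℝ) := by
    have := hconv (fun _ => 1)
    simpa [hN] using this
  set F : Finset (Finset (Fin r)) := (Finset.univ : Finset (Fin r)).powerset with hFdef
  set e : Finset (Fin r) → (Fin r → ℕ) → (Fin r → ℕ) → ℝ :=
    fun w i i' => if ∀ j ∈ w, i j = i' j then (1:ℝ) else 0 with hedef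
  set A : (Fin r → ℕ) → (Fin r → ℕ) → Finset (Fin r) :=
    fun i i' => Finset.univ.filter (fun j => i j = i' j) with hAdef
  have hM : ∀ i w, Nmatch i w = ∑ i' ∈ S, e w i i' := by
    intro i w; rw [hNmatch, hconv]
  have hMK : ∀ i k, NmatchK i k
      = ∑ i' ∈ S, (if (A i i').card = k then (1:ℝ) else 0) := by
    intro i k; rw [hNmatchK, hconv]
  have hνS : ∀ w, ν w = (1 / N) * ∑ i ∈ S, Nmatch i w := by
    intro w; rw [hν, hconv]
  have hρS : ∀ k, ρ k = (1 / N ^ 2) * ∑ i ∈ S, NmatchK i k := by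
    intro k; rw [hρ, hconv]
  have hνtS : ∀ k, νt k u = (1 / N ^ 2) * ∑ i ∈ S, Nmatch i u * NmatchK i k := by
    intro k; rw [hνt]
    congr 1
    rw [← hconv (fun i => Nmatch i u * NmatchK i k)]
    exact finsum_congr fun i => by ring
  have hνkS : ∀ k, νk k u = (1 / N) * ∑ i ∈ S, ∑ i' ∈ S,
      (if (A i i').card = k ∧ ∀ j ∈ u, i j = i' j then (1:ℝ) else 0) := by
    intro k; rw [hνk]
    congr 1
    have hin : ∀ i : Fin r → ℕ, (∑ᶠ i', Z i * Z i' *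
        (if (Finset.univ.filter (fun j => i j = i' j)).card = k ∧ ∀ j ∈ u, i j = i' j
          then (1 : ℝ) else 0))
        = Z i * ∑ i' ∈ S, (if (A i i').card = k ∧ ∀ j ∈ u, i j = i' j
            then (1:ℝ) else 0) := by
      intro i
      calc (∑ᶠ i', Z i * Z i' *
          (if (Finset.univ.filter (fun j => i j = i' j)).card = k ∧ ∀ j ∈ u, i j = i' j
            then (1 : ℝ) else 0))
          = ∑ᶠ i', Z i' * (Z i * (if (A i i').card = k ∧ ∀ j ∈ u, i j = i' j
              then (1:ℝ) else 0)) := finsum_congr fun i' => by ring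
        _ = ∑ i' ∈ S, Z i * (if (A i i').card = k ∧ ∀ j ∈ u, i j = i' j
              then (1:ℝ) else 0) := hconv _
        _ = Z i * ∑ i' ∈ S, (if (A i i').card = k ∧ ∀ j ∈ u, i j = i' j
              then (1:ℝ) else 0) := (Finset.mul_sum _ _ _).symm
    rw [finsum_congr hin, hconv]
  -- basic facts
  have hA_le : ∀ i i', (A i i').card ≤ r := by
    intro i i'
    calc (A i i').card ≤ (Finset.univ : Finset (Fin r)).card :=
          Finset.card_filter_le _ _
      _ = r := by simp
  have key1 : ∀ a : ℕ, a ≤ r →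
      ∑ k ∈ Finset.range (r+1), (2:ℝ)^k * (if a = k then (1:ℝ) else 0) = 2^a := by
    intro a ha
    rw [Finset.sum_congr rfl (fun k _ => by rw [mul_ite, mul_one, mul_zero]),
      Finset.sum_ite_eq, if_pos (Finset.mem_range.mpr (Nat.lt_succ_of_le ha))]
  have key2 : ∀ i i', (2:ℝ) ^ (A i i').card = ∑ w ∈ F, e w i i' := by
    intro i i'
    have h1 : ∀ w, e w i i' = if w ⊆ A i i' then (1:ℝ) else 0 := by
      intro w
      simp only [hedef, hAdef, Finset.subset_iff, Finset.mem_filter, Finset.mem_univ, true_and]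
    rw [Finset.sum_congr rfl fun w _ => h1 w, Finset.sum_boole]
    have h2 : F.filter (· ⊆ A i i') = (A i i').powerset := by
      ext w
      simp [hFdef, Finset.mem_powerset, Finset.subset_univ]
    rw [h2, Finset.card_powerset]
    push_cast
    rfl
  have key3 : ∀ i i', ∑ k ∈ Finset.range (r+1),
      (2:ℝ)^k * (if (A i i').card = k ∧ ∀ j ∈ u, i j = i' j then (1:ℝ) else 0)
      = e u i i' * ∑ w ∈ F, e w i i' := by
    intro i i'
    by_cases h : ∀ j ∈ u, i j = i' j
    · rw [← key2 i i']
      simp only [hedef, eq_true h, and_true, if_true, one_mul]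
      exact key1 _ (hA_le i i')
    · simp [hedef, h]
  have key4 : ∀ i, ∑ k ∈ Finset.range (r+1), (2:ℝ)^k * NmatchK i k
      = ∑ w ∈ F, Nmatch i w := by
    intro i
    calc ∑ k ∈ Finset.range (r+1), (2:ℝ)^k * NmatchK i k
        = ∑ k ∈ Finset.range (r+1), ∑ i' ∈ S,
            (2:ℝ)^k * (if (A i i').card = k then (1:ℝ) else 0) := by
          refine Finset.sum_congr rfl fun k _ => ?_
          rw [hMK, Finset.mul_sum]
      _ = ∑ i' ∈ S, ∑ k ∈ Finset.range (r+1),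
            (2:ℝ)^k * (if (A i i').card = k then (1:ℝ) else 0) := Finset.sum_comm
      _ = ∑ i' ∈ S, (2:ℝ)^(A i i').card :=
          Finset.sum_congr rfl fun i' _ => key1 _ (hA_le i i')
      _ = ∑ i' ∈ S, ∑ w ∈ F, e w i i' := Finset.sum_congr rfl fun i' _ => key2 i i'
      _ = ∑ w ∈ F, ∑ i' ∈ S, e w i i' := Finset.sum_comm
      _ = ∑ w ∈ F, Nmatch i w := Finset.sum_congr rfl fun w _ => (hM i w).symm
  have he_mul : ∀ w i i', e u i i' * e w i i' = e (u ∪ w) i i' := by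
    intro w i i'
    simp only [hedef, Finset.forall_mem_union]
    by_cases h1 : ∀ j ∈ u, i j = i' j
    · by_cases h2 : ∀ j ∈ w, i j = i' j
      · rw [if_pos h1, if_pos h2, if_pos (show _ ∧ _ from ⟨h1, h2⟩), one_mul]
      · rw [if_neg h2, if_neg (show ¬(_ ∧ _) from fun h => h2 h.2), mul_zero]
    · rw [if_neg h1, if_neg (show ¬(_ ∧ _) from fun h => h1 h.1), zero_mul]
  have hsumM : ∀ w, ∑ i ∈ S, Nmatch i w = N * ν w := by
    intro w
    rw [hνS w]
    field_simp
  -- P1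
  have P1 : ∑ k ∈ Finset.range (r+1), (2:ℝ)^k * νk k u = ∑ w ∈ F, ν (u ∪ w) := by
    calc ∑ k ∈ Finset.range (r+1), (2:ℝ)^k * νk k u
        = ∑ k ∈ Finset.range (r+1), ∑ i ∈ S, ∑ i' ∈ S, (1/N) * ((2:ℝ)^k *
            (if (A i i').card = k ∧ ∀ j ∈ u, i j = i' j then (1:ℝ) else 0)) := by
          refine Finset.sum_congr rfl fun k _ => ?_
          rw [hνkS k]
          simp only [Finset.mul_sum]
          exact Finset.sum_congr rfl fun i _ => Finset.sum_congr rfl fun i' _ => by ring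
      _ = ∑ i ∈ S, ∑ i' ∈ S, ∑ k ∈ Finset.range (r+1), (1/N) * ((2:ℝ)^k *
            (if (A i i').card = k ∧ ∀ j ∈ u, i j = i' j then (1:ℝ) else 0)) := by
          rw [Finset.sum_comm]
          exact Finset.sum_congr rfl fun i _ => Finset.sum_comm
      _ = ∑ i ∈ S, ∑ i' ∈ S, (1/N) * (e u i i' * ∑ w ∈ F, e w i i') := by
          refine Finset.sum_congr rfl fun i _ => Finset.sum_congr rfl fun i' _ => ?_
          rw [← Finset.mul_sum, key3 i i']
      _ = ∑ i ∈ S, ∑ i' ∈ S, ∑ w ∈ F, (1/N) * e (u ∪ w) i i' := by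
          refine Finset.sum_congr rfl fun i _ => Finset.sum_congr rfl fun i' _ => ?_
          rw [Finset.mul_sum, Finset.mul_sum]
          exact Finset.sum_congr rfl fun w _ => by rw [← he_mul w i i']
      _ = ∑ i ∈ S, ∑ w ∈ F, (1/N) * Nmatch i (u ∪ w) := by
          refine Finset.sum_congr rfl fun i _ => ?_
          rw [Finset.sum_comm]
          refine Finset.sum_congr rfl fun w _ => ?_
          rw [← Finset.mul_sum, hM i (u ∪ w)]
      _ = ∑ w ∈ F, (1/N) * ∑ i ∈ S, Nmatch i (u ∪ w) := by
          rw [Finset.sum_comm]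
          exact Finset.sum_congr rfl fun w _ => (Finset.mul_sum _ _ _).symm
      _ = ∑ w ∈ F, ν (u ∪ w) := by
          refine Finset.sum_congr rfl fun w _ => ?_
          rw [hsumM, ← mul_assoc]
          field_simp
  set B : Finset (Fin r) → ℝ := fun w => ∑ i ∈ S, Nmatch i u * Nmatch i w with hBdef
  have P2 : ∑ k ∈ Finset.range (r+1), (2:ℝ)^k * νt k u
      = (1/N^2) * ∑ w ∈ F, B w := by
    calc ∑ k ∈ Finset.range (r+1), (2:ℝ)^k * νt k u
        = ∑ k ∈ Finset.range (r+1), ∑ i ∈ S,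
            (1/N^2) * (Nmatch i u * ((2:ℝ)^k * NmatchK i k)) := by
          refine Finset.sum_congr rfl fun k _ => ?_
          rw [hνtS k]
          simp only [Finset.mul_sum]
          exact Finset.sum_congr rfl fun i _ => by ring
      _ = ∑ i ∈ S, ∑ k ∈ Finset.range (r+1),
            (1/N^2) * (Nmatch i u * ((2:ℝ)^k * NmatchK i k)) := Finset.sum_comm
      _ = ∑ i ∈ S, (1/N^2) * (Nmatch i u * ∑ w ∈ F, Nmatch i w) := by
          refine Finset.sum_congr rfl fun i _ => ?_
          rw [← key4 i, Finset.mul_sum, Finset.mul_sum]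
      _ = (1/N^2) * ∑ w ∈ F, B w := by
          rw [hBdef]
          simp only [Finset.mul_sum]
          exact Finset.sum_comm
  have P3 : ∑ k ∈ Finset.range (r+1), (2:ℝ)^k * ρ k = (1/N) * ∑ w ∈ F, ν w := by
    calc ∑ k ∈ Finset.range (r+1), (2:ℝ)^k * ρ k
        = ∑ k ∈ Finset.range (r+1), ∑ i ∈ S, (1/N^2) * ((2:ℝ)^k * NmatchK i k) := by
          refine Finset.sum_congr rfl fun k _ => ?_
          rw [hρS k]
          simp only [Finset.mul_sum]
          exact Finset.sum_congr rfl fun i _ => by ring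
      _ = ∑ i ∈ S, ∑ k ∈ Finset.range (r+1), (1/N^2) * ((2:ℝ)^k * NmatchK i k) :=
          Finset.sum_comm
      _ = ∑ i ∈ S, (1/N^2) * ∑ w ∈ F, Nmatch i w := by
          refine Finset.sum_congr rfl fun i _ => ?_
          rw [← key4 i, Finset.mul_sum]
      _ = ∑ w ∈ F, (1/N^2) * ∑ i ∈ S, Nmatch i w := by
          simp only [Finset.mul_sum]
          exact Finset.sum_comm
      _ = (1/N) * ∑ w ∈ F, ν w := by
          rw [Finset.mul_sum]
          refine Finset.sum_congr rfl fun w _ => ?_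
          rw [hsumM w]
          field_simp
  set H : Finset (Fin r) → ℝ := fun w => -(2/N^2) * B w + (1/N) * ν w * ν u with hHdef
  have hsplit : γ u = (∑ k ∈ Finset.range (r+1), (2:ℝ)^k * νk k u)
      - 2 * (∑ k ∈ Finset.range (r+1), (2:ℝ)^k * νt k u)
      + (∑ k ∈ Finset.range (r+1), (2:ℝ)^k * ρ k) * ν u := by
    rw [hγ, Finset.mul_sum, Finset.sum_mul, ← Finset.sum_sub_distrib,
      ← Finset.sum_add_distrib]
    exact Finset.sum_congr rfl fun k _ => by ring
  have hγ2 : γ u = (∑ w ∈ F, ν (u ∪ w)) + ∑ w ∈ F, H w := by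
    rw [hsplit, P1, P2, P3, ← Finset.sum_add_distrib]
    simp only [hHdef, Finset.mul_sum, Finset.sum_mul, ← Finset.sum_sub_distrib,
      ← Finset.sum_add_distrib]
    exact Finset.sum_congr rfl fun w _ => by ring
  -- basic positivity / size facts
  have hM_nonneg : ∀ i w, 0 ≤ Nmatch i w := by
    intro i w; rw [hM]
    exact Finset.sum_nonneg fun i' _ => by simp only [hedef]; split <;> norm_num
  have hM_one : ∀ (w) (i), i ∈ S → (1:ℝ) ≤ Nmatch i w := by
    intro w i hi
    rw [hM]
    have h1 : e w i i = 1 := by simp [hedef]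
    calc (1:ℝ) = e w i i := h1.symm
      _ ≤ ∑ i' ∈ S, e w i i' :=
        Finset.single_le_sum (fun i' _ => by simp only [hedef]; split <;> norm_num) hi
  have hsum_ge : ∀ w, N ≤ ∑ i ∈ S, Nmatch i w := by
    intro w
    rw [hN']
    calc ((S.card : ℕ):ℝ) = ∑ _i ∈ S, (1:ℝ) := by
          rw [Finset.sum_const, nsmul_eq_mul, mul_one]
      _ ≤ ∑ i ∈ S, Nmatch i w := Finset.sum_le_sum fun i hi => hM_one w i hi
  have hν_one : ∀ w, (1:ℝ) ≤ ν w := by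
    intro w
    rw [hνS]
    calc (1:ℝ) = (1/N) * N := (one_div_mul_cancel hN0).symm
      _ ≤ (1/N) * ∑ i ∈ S, Nmatch i w :=
        mul_le_mul_of_nonneg_left (hsum_ge w) (by positivity)
  have hν_pos : ∀ w, 0 < ν w := fun w => lt_of_lt_of_le one_pos (hν_one w)
  have hM_empty : ∀ i, Nmatch i ∅ = N := by
    intro i; rw [hM, hN']
    have h1 : ∀ i' ∈ S, e ∅ i i' = 1 := fun i' _ => by simp [hedef]
    rw [Finset.sum_congr rfl h1, Finset.sum_const, nsmul_eq_mul, mul_one]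
  have hν_empty : ν ∅ = N := by
    rw [hνS, Finset.sum_congr rfl fun i _ => hM_empty i, Finset.sum_const, nsmul_eq_mul, ← hN']
    field_simp
  have hM_anti : ∀ i (w₁ w₂ : Finset (Fin r)), w₁ ⊆ w₂ → Nmatch i w₂ ≤ Nmatch i w₁ := by
    intro i w₁ w₂ hsub
    rw [hM, hM]
    refine Finset.sum_le_sum fun i' _ => ?_
    simp only [hedef]
    by_cases h2 : ∀ j ∈ w₂, i j = i' j
    · rw [if_pos h2, if_pos (fun j hj => h2 j (hsub hj))]
    · rw [if_neg h2]; split <;> norm_num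
  have heps_pos : 0 < eps := by
    obtain ⟨i, j, hZi, hje⟩ := hepsmax
    have hiS : i ∈ S := by
      simp only [hSdef, Set.Finite.mem_toFinset, Function.mem_support, hZi]
      norm_num
    have h1 := hM_one {j} i hiS
    rw [← hje]
    exact div_pos (by linarith) hNpos
  have hM_eps : ∀ i ∈ S, ∀ w : Finset (Fin r), w.Nonempty → Nmatch i w ≤ N * eps := by
    intro i hi w hw
    obtain ⟨j, hj⟩ := hw
    have h2 := hepsub i j (hZ1 i hi)
    rw [div_le_iff₀ hNpos] at h2
    calc Nmatch i w ≤ Nmatch i {j} :=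
          hM_anti i {j} w (Finset.singleton_subset_iff.mpr hj)
      _ ≤ eps * N := h2
      _ = N * eps := mul_comm _ _
  have hν_eps : ∀ w : Finset (Fin r), w.Nonempty → ν w ≤ N * eps := by
    intro w hw
    rw [hνS]
    have h1 : ∑ i ∈ S, Nmatch i w ≤ ∑ _i ∈ S, N * eps :=
      Finset.sum_le_sum fun i hi => hM_eps i hi w hw
    rw [Finset.sum_const, nsmul_eq_mul, ← hN'] at h1
    calc (1/N) * ∑ i ∈ S, Nmatch i w ≤ (1/N) * (N * (N * eps)) :=
          mul_le_mul_of_nonneg_left h1 (by positivity)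
      _ = N * eps := by field_simp
  have hη_pos : 0 < η := by
    obtain ⟨u', v', _, _, he'⟩ := hηmax
    rw [← he']
    exact div_pos (hν_pos v') (hν_pos u')
  -- chaining
  have hchain : ∀ n (v : Finset (Fin r)), u ⊆ v → v.card = u.card + n →
      ν v ≤ η^n * ν u := by
    intro n
    induction n with
    | zero =>
      intro v hv hc
      have h0 : u = v := Finset.eq_of_subset_of_card_le hv (by omega)
      rw [← h0, pow_zero, one_mul]
    | succ n ih =>
      intro v hv hc
      have hne : u ≠ v := by intro h; rw [h] at hc; omega
      obtain ⟨x, hxv, hxu⟩ :=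
        Finset.exists_of_ssubset (Finset.ssubset_iff_subset_ne.mpr ⟨hv, hne⟩)
      have h1 : u ⊆ v.erase x := fun y hy =>
        Finset.mem_erase.mpr ⟨fun hxy => hxu (hxy ▸ hy), hv hy⟩
      have h2 : (v.erase x).card = u.card + n := by
        rw [Finset.card_erase_of_mem hxv]; omega
      have h3 := ih (v.erase x) h1 h2
      have h4 : ν v ≤ η * ν (v.erase x) := by
        have h5 := hηub (v.erase x) v
          (Finset.empty_ssubset.mpr ⟨hu.choose, h1 hu.choose_spec⟩)
          (Finset.erase_ssubset hxv)
        rw [div_le_iff₀ (hν_pos _)] at h5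
        linarith [h5]
      calc ν v ≤ η * ν (v.erase x) := h4
        _ ≤ η * (η^n * ν u) := mul_le_mul_of_nonneg_left h3 (le_of_lt hη_pos)
        _ = η^(n+1) * ν u := by ring
  have hcard_union : ∀ w : Finset (Fin r), (u ∪ w).card = u.card + (w \ u).card := by
    intro w
    rw [Finset.union_comm u w, ← Finset.card_sdiff_add_card w u]
    omega
  -- first sum: split by w ⊆ u
  have hfila : F.filter (fun w => w ⊆ u) = u.powerset := by
    ext w
    simp [hFdef, Finset.subset_univ]
  have hS1a : ∑ w ∈ F.filter (fun w => w ⊆ u), ν (u ∪ w) = 2^u.card * ν u := by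
    rw [hfila]
    have h1 : ∀ w ∈ u.powerset, ν (u ∪ w) = ν u := fun w hw => by
      rw [Finset.union_eq_left.mpr (Finset.mem_powerset.mp hw)]
    rw [Finset.sum_congr rfl h1, Finset.sum_const, Finset.card_powerset, nsmul_eq_mul]
    push_cast
    ring
  have hS1b_low : 0 ≤ ∑ w ∈ F.filter (fun w => ¬ w ⊆ u), ν (u ∪ w) :=
    Finset.sum_nonneg fun w _ => le_of_lt (hν_pos _)
  have hsum_eta : ∑ w ∈ F.filter (fun w => ¬ w ⊆ u), η ^ (w \ u).card
      = 2^u.card * (1+η)^(r - u.card) - 2^u.card := by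
    have h1 := aux_sum_pow u η
    rw [← Finset.sum_filter_add_sum_filter_not Finset.univ.powerset (fun w => w ⊆ u)
      (fun w => η ^ (w \ u).card), ← hFdef] at h1
    have h2 : ∑ w ∈ F.filter (fun w => w ⊆ u), η ^ (w \ u).card = 2^u.card := by
      rw [hfila]
      have h3 : ∀ w ∈ u.powerset, η ^ (w \ u).card = 1 := fun w hw => by
        rw [Finset.sdiff_eq_empty_iff_subset.mpr (Finset.mem_powerset.mp hw),
          Finset.card_empty, pow_zero]
      rw [Finset.sum_congr rfl h3, Finset.sum_const, Finset.card_powerset, nsmul_eq_mul, mul_one]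
      push_cast
      rfl
    linarith [h1, h2]
  have hS1b : ∑ w ∈ F.filter (fun w => ¬ w ⊆ u), ν (u ∪ w)
      ≤ (2^u.card * (1+η)^(r - u.card) - 2^u.card) * ν u := by
    calc ∑ w ∈ F.filter (fun w => ¬ w ⊆ u), ν (u ∪ w)
        ≤ ∑ w ∈ F.filter (fun w => ¬ w ⊆ u), η ^ (w \ u).card * ν u :=
          Finset.sum_le_sum fun w _ =>
            hchain _ (u ∪ w) Finset.subset_union_left (hcard_union w)
      _ = (∑ w ∈ F.filter (fun w => ¬ w ⊆ u), η ^ (w \ u).card) * ν u :=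
          (Finset.sum_mul _ _ _).symm
      _ = _ := by rw [hsum_eta]
  have hS1 : ∑ w ∈ F, ν (u ∪ w)
      = (∑ w ∈ F.filter (fun w => w ⊆ u), ν (u ∪ w))
        + ∑ w ∈ F.filter (fun w => ¬ w ⊆ u), ν (u ∪ w) :=
    (Finset.sum_filter_add_sum_filter_not F _ _).symm
  -- H part
  have hB_nonneg : ∀ w, 0 ≤ B w := fun w =>
    Finset.sum_nonneg fun i _ => mul_nonneg (hM_nonneg i u) (hM_nonneg i w)
  have hB_empty : B ∅ = N^2 * ν u := by
    rw [hBdef]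
    simp only
    have h1 : ∀ i ∈ S, Nmatch i u * Nmatch i ∅ = N * Nmatch i u := fun i _ => by
      rw [hM_empty i]; ring
    rw [Finset.sum_congr rfl h1, ← Finset.mul_sum, hsumM]
    ring
  have hH_empty : H ∅ = - ν u := by
    rw [hHdef]
    simp only
    rw [hB_empty, hν_empty]
    field_simp
    ring
  have hB_eps : ∀ w : Finset (Fin r), w.Nonempty → B w ≤ N^2 * eps * ν u := by
    intro w hw
    rw [hBdef]
    simp only
    calc ∑ i ∈ S, Nmatch i u * Nmatch i w ≤ ∑ i ∈ S, Nmatch i u * (N * eps) :=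
        Finset.sum_le_sum fun i hi =>
          mul_le_mul_of_nonneg_left (hM_eps i hi w hw) (hM_nonneg i u)
      _ = (∑ i ∈ S, Nmatch i u) * (N * eps) := (Finset.sum_mul _ _ _).symm
      _ = (N * ν u) * (N * eps) := by rw [hsumM]
      _ = N^2 * eps * ν u := by ring
  have hN2pos : (0:ℝ) < N^2 := by positivity
  have hH_up : ∀ w : Finset (Fin r), w.Nonempty → H w ≤ eps * ν u := by
    intro w hw
    rw [hHdef]
    simp only
    have h1 : -(2/N^2) * B w ≤ 0 := by
      have h0 := hB_nonneg w
      have h2 : 0 ≤ 2/N^2 := by positivity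
      nlinarith
    have h3 := hν_eps w hw
    have h4 : (1/N) * ν w * ν u ≤ eps * ν u := by
      have h5 : (1/N) * ν w ≤ eps := by
        calc (1/N) * ν w ≤ (1/N) * (N * eps) :=
            mul_le_mul_of_nonneg_left h3 (by positivity)
          _ = eps := by field_simp
      exact mul_le_mul_of_nonneg_right h5 (le_of_lt (hν_pos u))
    linarith
  have hH_low : ∀ w : Finset (Fin r), w.Nonempty →
      (1/N) * ν u - 2 * eps * ν u ≤ H w := by
    intro w hw
    rw [hHdef]
    simp only
    have h1 : -(2/N^2) * B w ≥ -(2 * eps * ν u) := by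
      have h2 := hB_eps w hw
      have h3 : (2/N^2) * B w ≤ (2/N^2) * (N^2 * eps * ν u) :=
        mul_le_mul_of_nonneg_left h2 (by positivity)
      have h4 : (2/N^2) * (N^2 * eps * ν u) = 2 * eps * ν u := by field_simp
      linarith
    have h5 : (1/N) * ν u ≤ (1/N) * ν w * ν u := by
      have h6 : (1/N) * 1 ≤ (1/N) * ν w :=
        mul_le_mul_of_nonneg_left (hν_one w) (by positivity)
      have := hν_pos u
      nlinarith
    linarith
  -- counting
  have hmemF : ∅ ∈ F := Finset.mem_powerset.mpr (Finset.empty_subset _)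
  have hcardF : (F.card : ℝ) = 2^r := by
    rw [hFdef, Finset.card_powerset, Finset.card_univ, Fintype.card_fin]
    push_cast
    rfl
  have hcard_erase : (((F.erase ∅).card : ℕ) : ℝ) = 2^r - 1 := by
    rw [Finset.card_erase_of_mem hmemF,
      Nat.cast_sub (Nat.one_le_iff_ne_zero.mpr (Finset.card_ne_zero_of_mem hmemF)), hcardF]
    norm_num
  have hHsum : ∑ w ∈ F, H w = H ∅ + ∑ w ∈ F.erase ∅, H w :=
    (Finset.add_sum_erase F H hmemF).symm
  have hEup : ∑ w ∈ F.erase ∅, H w ≤ (2^r - 1) * (eps * ν u) := by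
    calc ∑ w ∈ F.erase ∅, H w ≤ ∑ _w ∈ F.erase ∅, eps * ν u :=
        Finset.sum_le_sum fun w hw => hH_up w
          (Finset.nonempty_iff_ne_empty.mpr (Finset.ne_of_mem_erase hw))
      _ = (((F.erase ∅).card : ℕ) : ℝ) * (eps * ν u) := by
          rw [Finset.sum_const, nsmul_eq_mul]
      _ = _ := by rw [hcard_erase]
  have hElow : (2^r - 1) * ((1/N) * ν u - 2 * eps * ν u) ≤ ∑ w ∈ F.erase ∅, H w := by
    calc (2^r - 1) * ((1/N) * ν u - 2 * eps * ν u)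
        = (((F.erase ∅).card : ℕ) : ℝ) * ((1/N) * ν u - 2 * eps * ν u) := by
          rw [hcard_erase]
      _ = ∑ _w ∈ F.erase ∅, ((1/N) * ν u - 2 * eps * ν u) := by
          rw [Finset.sum_const, nsmul_eq_mul]
      _ ≤ ∑ w ∈ F.erase ∅, H w :=
        Finset.sum_le_sum fun w hw => hH_low w
          (Finset.nonempty_iff_ne_empty.mpr (Finset.ne_of_mem_erase hw))
  -- assembly
  have hνu := hν_pos u
  have h2r1 : (0:ℝ) < 2^r - 1 := by
    have h0 : (2:ℝ)^1 ≤ 2^r := pow_le_pow_right₀ (by norm_num) (by omega)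
    norm_num at h0
    linarith
  have hpow_id : (2:ℝ)^(r+1) - 2 = 2 * (2^r - 1) := by
    rw [pow_succ]; ring
  set R : ℝ := ∑ w ∈ F.filter (fun w => ¬ w ⊆ u), ν (u ∪ w) with hRdef
  set E : ℝ := ∑ w ∈ F.erase ∅, H w with hEdef
  clear_value R E
  have hγeq : γ u = 2^u.card * ν u + R - ν u + E := by
    rw [hγ2, hS1, hS1a, hHsum, hH_empty]
    ring
  have hElow' : (2^r - 1) * (1/N) * ν u - 2 * ((2^r - 1) * (eps * ν u)) ≤ E := by
    have h1 : (2^r - 1) * ((1/N) * ν u - 2 * eps * ν u)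
        = (2^r - 1) * (1/N) * ν u - 2 * ((2^r - 1) * (eps * ν u)) := by
      ring
    linarith [hElow]
  have hP : 0 < (2^r - 1) * (1/N) * ν u := by
    apply mul_pos (mul_pos h2r1 (by positivity)) hνu
  clear_value S F e A B H
  clear hγ2 hS1 hS1a hHsum hH_empty hsplit P1 P2 P3 key1 key2 key3 key4
  clear he_mul hsumM hconv hM hMK hνS hρS hνtS hνkS hB_empty hB_eps hH_up hH_low
  constructor
  · rw [lt_div_iff₀ hνu]
    have hExp : (2^u.card - 1 - (2^(r+1) - 2) * eps) * ν u
        = 2^u.card * ν u - ν u - 2 * ((2^r - 1) * (eps * ν u)) := by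
      rw [hpow_id]; ring
    rw [hExp]
    linarith [hγeq, hS1b_low, hElow', hP]
  · rw [div_le_iff₀ hνu]
    have hpow : (1+η)^(r - u.card) ≤ (1+2*η)^(r - u.card) :=
      pow_le_pow_left₀ (by linarith) (by linarith) _
    have hpow' : 2^u.card * (1+η)^(r - u.card) * ν u
        ≤ 2^u.card * (1+2*η)^(r - u.card) * ν u :=
      mul_le_mul_of_nonneg_right
        (mul_le_mul_of_nonneg_left hpow (by positivity)) (le_of_lt hνu)
    have hS1b' : R ≤ 2^u.card * (1+η)^(r - u.card) * ν u - 2^u.card * ν u := by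
      have h1 : (2^u.card * (1+η)^(r - u.card) - 2^u.card) * ν u
          = 2^u.card * (1+η)^(r - u.card) * ν u - 2^u.card * ν u := by ring
      linarith [hS1b, h1.ge, h1.le]
    have hepsnn : 0 ≤ (2^r - 1) * (eps * ν u) :=
      mul_nonneg (le_of_lt h2r1) (mul_nonneg (le_of_lt heps_pos) (le_of_lt hνu))
    have hExp2 : (2^u.card * (1+2*η)^(r - u.card) - 1 + (2^(r+1) - 2) * eps) * ν u
        = 2^u.card * (1+2*η)^(r - u.card) * ν u - ν u + 2 * ((2^r - 1) * (eps * ν u)) := by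
      rw [hpow_id]; ring
    rw [hExp2]
    linarith [hγeq, hS1b', hEup, hpow', hepsnn]
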